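/- Let ρ : [0,∞) → [Φ,∞) be continuous with Φ > 0, γ₁, γ₂ ∈ [0,1) and x₁ > 0. Define f piecewise by f(x) = (γ₁/(1−γ₁)) ∫ₓ^{x₁} exp(−(1/(1−γ₁))∫ₓ^y ρ) dy + exp(−(1/(1−γ₁))∫ₓ^{x₁} ρ) · (γ₂/(1−γ₂)) ∫_{x₁}^∞ exp(−(1/(1−γ₂))∫_{x₁}^y ρ) dy for 0 < x < x₁, and f(x) = (γ₂/(1−γ₂)) ∫ₓ^∞ exp(−(1/(1−γ₂))∫ₓ^y ρ) dy for x ≥ x₁. Then f is continuous at x₁ (f(x₁−) = f(x₁)), f satisfies (1−γ₁)f'(x) = ρ(x)f(x) − γ₁ on (0,x₁), and (1−γ₂)f'(x) = ρ(x)f(x) − γ₂ on (x₁,∞). -/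

import Mathlib

open Set MeasureTheory

theorem stmt18 (Φ γ₁ γ₂ x₁ : ℝ) (hΦ : 0 < Φ) (hγ₁ : γ₁ ∈ Set.Ico (0:ℝ) 1)
    (hγ₂ : γ₂ ∈ Set.Ico (0:ℝ) 1) (hx₁ : 0 < x₁)
    (ρ : ℝ → ℝ) (hρc : Continuous ρ) (hρ : ∀ u, 0 ≤ u → Φ ≤ ρ u)
    (f : ℝ → ℝ)
    (hflt : ∀ x, 0 < x → x < x₁ → f x =
      (γ₁ / (1 - γ₁)) * (∫ y in x..x₁, Real.exp (-(1 / (1 - γ₁)) * ∫ u in x..y, ρ u))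
      + Real.exp (-(1 / (1 - γ₁)) * ∫ u in x..x₁, ρ u) *
        ((γ₂ / (1 - γ₂)) *
          ∫ y in Set.Ici x₁, Real.exp (-(1 / (1 - γ₂)) * ∫ u in x₁..y, ρ u)))
    (hfge : ∀ x, x₁ ≤ x → f x =
      (γ₂ / (1 - γ₂)) *
        ∫ y in Set.Ici x, Real.exp (-(1 / (1 - γ₂)) * ∫ u in x..y, ρ u)) :
    Filter.Tendsto f (nhdsWithin x₁ (Set.Iio x₁)) (nhds (f x₁)) ∧
    (∀ x, 0 < x → x < x₁ → HasDerivAt f ((ρ x * f x - γ₁) / (1 - γ₁)) x) ∧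
    (∀ x, x₁ < x → HasDerivAt f ((ρ x * f x - γ₂) / (1 - γ₂)) x) := by
  obtain ⟨hγ₁0, hγ₁1⟩ := hγ₁
  obtain ⟨hγ₂0, hγ₂1⟩ := hγ₂
  have h1γ₁ : (0:ℝ) < 1 - γ₁ := by linarith
  have h1γ₂ : (0:ℝ) < 1 - γ₂ := by linarith
  set a : ℝ := 1 / (1 - γ₁) with ha
  set b : ℝ := 1 / (1 - γ₂) with hb
  have hapos : 0 < a := by positivity
  have hbpos : 0 < b := by positivity
  set G : ℝ → ℝ := fun y => ∫ u in (0:ℝ)..y, ρ u with hGdef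
  have hGderiv : ∀ y, HasDerivAt G (ρ y) y := fun y =>
    (hρc.integral_hasStrictDerivAt 0 y).hasDerivAt
  have hGcont : Continuous G := by
    rw [continuous_iff_continuousAt]; exact fun y => (hGderiv y).continuousAt
  have hint : ∀ x y : ℝ, (∫ u in x..y, ρ u) = G y - G x := fun x y =>
    (intervalIntegral.integral_interval_sub_left (hρc.intervalIntegrable _ _)
      (hρc.intervalIntegrable _ _)).symm
  -- the two exponential kernels
  set φ₁ : ℝ → ℝ := fun y => Real.exp (-a * G y) with hφ₁
  set φ₂ : ℝ → ℝ := fun y => Real.exp (-b * G y) with hφ₂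
  have hφ₁c : Continuous φ₁ := Real.continuous_exp.comp (continuous_const.mul hGcont)
  have hφ₂c : Continuous φ₂ := Real.continuous_exp.comp (continuous_const.mul hGcont)
  have hlow : ∀ y, x₁ ≤ y → (y - x₁) * Φ ≤ G y - G x₁ := by
    intro y hy'
    rw [← hint x₁ y]
    have h2 : (∫ u in x₁..y, (Φ:ℝ)) ≤ ∫ u in x₁..y, ρ u := by
      apply intervalIntegral.integral_mono_on hy' intervalIntegrable_const
        (hρc.intervalIntegrable _ _)
      intro u hu
      exact hρ u (le_trans hx₁.le hu.1)
    simpa [mul_comm] using h2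
  -- integrability of φ₂ on [x₁, ∞)
  have hφ₂int : IntegrableOn φ₂ (Ici x₁) := by
    have hdom : IntegrableOn (fun y => Real.exp (-b * G x₁ + b * Φ * x₁) * Real.exp (-(b*Φ) * y))
        (Ici x₁) := by
      have : IntegrableOn (fun y => Real.exp (-(b*Φ) * y)) (Ici x₁) :=
        (integrableOn_Ici_iff_integrableOn_Ioi (by exact enorm_ne_top)).2 (exp_neg_integrableOn_Ioi x₁ (by positivity))
      exact this.const_mul _
    refine Integrable.mono' hdom (hφ₂c.aestronglyMeasurable.restrict) ?_
    refine (ae_restrict_iff' measurableSet_Ici).2 (Filter.Eventually.of_forall fun y hy => ?_)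
    have hy' : x₁ ≤ y := hy
    have h3 := hlow y hy'
    simp only [hφ₂]
    rw [Real.norm_eq_abs, abs_of_pos (Real.exp_pos _), ← Real.exp_add]
    apply Real.exp_le_exp.2
    nlinarith
  -- the tail integral and the "partial" interval integral
  set H : ℝ → ℝ := fun x => ∫ y in Ici x, φ₂ y with hH
  set K : ℝ → ℝ := fun x => ∫ y in x₁..x, φ₂ y with hK
  have hKderiv : ∀ x, HasDerivAt K (φ₂ x) x := fun x =>
    (hφ₂c.integral_hasStrictDerivAt x₁ x).hasDerivAt
  have hsplit : ∀ x, x₁ ≤ x → H x = H x₁ - K x := by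
    intro x hx
    have hIco : IntegrableOn φ₂ (Ico x₁ x) :=
      hφ₂int.mono_set (fun y hy => hy.1)
    have hIci : IntegrableOn φ₂ (Ici x) :=
      hφ₂int.mono_set (fun y hy => le_trans hx hy)
    have hunion : Ico x₁ x ∪ Ici x = Ici x₁ := Ico_union_Ici_eq_Ici hx
    have hdisj : Disjoint (Ico x₁ x) (Ici x) := by
      apply Set.disjoint_left.2
      intro y hy1 hy2
      exact absurd hy2 (not_le.2 hy1.2)
    have hU := setIntegral_union hdisj measurableSet_Ici hIco hIci (f := φ₂) (μ := volume)
    rw [hunion] at hU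
    have hKeq : K x = ∫ y in Ico x₁ x, φ₂ y := by
      show (∫ y in x₁..x, φ₂ y) = _
      rw [intervalIntegral.integral_of_le hx, integral_Ioc_eq_integral_Ioo,
        integral_Ico_eq_integral_Ioo]
    show (∫ y in Ici x, φ₂ y) = (∫ y in Ici x₁, φ₂ y) - K x
    rw [hKeq]
    linarith [hU]
  -- closed forms
  set C : ℝ := (γ₂ / (1 - γ₂)) *
      ∫ y in Set.Ici x₁, Real.exp (-b * ∫ u in x₁..y, ρ u) with hC
  set Ψ : ℝ → ℝ := fun x => ∫ y in x..x₁, φ₁ y with hΨ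
  have hΨderiv : ∀ x, HasDerivAt Ψ (-φ₁ x) x := by
    intro x
    have h1 := (hφ₁c.integral_hasStrictDerivAt x₁ x).hasDerivAt.neg
    have h2 : (-fun u => ∫ y in x₁..u, φ₁ y) = Ψ := by
      funext u
      simp [hΨ, intervalIntegral.integral_symm x₁ u]
    rwa [h2] at h1
  set g₁ : ℝ → ℝ := fun x =>
      Real.exp (a * G x) * ((γ₁ / (1 - γ₁)) * Ψ x + Real.exp (-a * G x₁) * C) with hg₁
  have hfg₁ : ∀ x, 0 < x → x < x₁ → f x = g₁ x := by
    intro x hx0 hxx₁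
    rw [hflt x hx0 hxx₁]
    have key : ∀ y : ℝ, Real.exp (-a * ∫ u in x..y, ρ u)
        = Real.exp (a * G x) * φ₁ y := by
      intro y
      simp only [hφ₁]
      rw [hint, ← Real.exp_add]
      congr 1; ring
    simp only [key, intervalIntegral.integral_const_mul, hg₁, hΨ, hφ₁]
    ring
  have hg₁deriv : ∀ x, HasDerivAt g₁
      (a * ρ x * g₁ x - γ₁ / (1 - γ₁)) x := by
    intro x
    have hE : HasDerivAt (fun x => Real.exp (a * G x)) (a * ρ x * Real.exp (a * G x)) x := by
      have h := ((hGderiv x).const_mul a).exp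
      convert h using 1; ring
    have hI : HasDerivAt (fun x => (γ₁ / (1 - γ₁)) * Ψ x + Real.exp (-a * G x₁) * C)
        ((γ₁ / (1 - γ₁)) * (-φ₁ x)) x := by
      simpa using (((hΨderiv x).const_mul (γ₁ / (1 - γ₁))).add_const (Real.exp (-a * G x₁) * C))
    have h := hE.mul hI
    refine h.congr_deriv (Eq.symm ?_)
    have hcancel : Real.exp (a * G x) * φ₁ x = 1 := by
      simp only [hφ₁]
      rw [← Real.exp_add]
      rw [show a * G x + -a * G x = 0 by ring, Real.exp_zero]
    simp only [hg₁]
    linear_combination (γ₁ / (1 - γ₁)) * hcancel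
  set g₂ : ℝ → ℝ := fun x =>
      (γ₂ / (1 - γ₂)) * (Real.exp (b * G x) * (H x₁ - K x)) with hg₂
  have hfg₂ : ∀ x, x₁ ≤ x → f x = g₂ x := by
    intro x hx
    rw [hfge x hx]
    have key : ∀ y : ℝ, Real.exp (-b * ∫ u in x..y, ρ u)
        = Real.exp (b * G x) * φ₂ y := by
      intro y
      simp only [hφ₂]
      rw [hint, ← Real.exp_add]
      congr 1; ring
    simp only [key, integral_const_mul]
    have hs := hsplit x hx
    simp only [hg₂, hH] at hs ⊢
    rw [hs]
  have hg₂deriv : ∀ x, HasDerivAt g₂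
      (b * ρ x * g₂ x - γ₂ / (1 - γ₂)) x := by
    intro x
    have hE : HasDerivAt (fun x => Real.exp (b * G x)) (b * ρ x * Real.exp (b * G x)) x := by
      have h := ((hGderiv x).const_mul b).exp
      convert h using 1; ring
    have hI : HasDerivAt (fun x => H x₁ - K x) (-φ₂ x) x := by
      simpa using ((hKderiv x).const_sub (H x₁))
    have h := (hE.mul hI).const_mul (γ₂ / (1 - γ₂))
    refine h.congr_deriv (Eq.symm ?_)
    have hcancel : Real.exp (b * G x) * φ₂ x = 1 := by
      simp only [hφ₂]
      rw [← Real.exp_add]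
      rw [show b * G x + -b * G x = 0 by ring, Real.exp_zero]
    simp only [hg₂]
    linear_combination (γ₂ / (1 - γ₂)) * hcancel
  have hfx₁ : f x₁ = C := (hfge x₁ le_rfl).trans hC.symm
  refine ⟨?_, ?_, ?_⟩
  · -- left continuity at x₁
    have hΨ0 : Ψ x₁ = 0 := by simp [hΨ]
    have hg₁x₁ : g₁ x₁ = f x₁ := by
      simp only [hg₁, hΨ0, mul_zero, zero_add, hfx₁, ← mul_assoc, ← Real.exp_add]
      rw [show a * G x₁ + -a * G x₁ = 0 by ring, Real.exp_zero, one_mul]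
    have hg₁cont : ContinuousAt g₁ x₁ := (hg₁deriv x₁).continuousAt
    have h1 : Filter.Tendsto g₁ (nhdsWithin x₁ (Set.Iio x₁)) (nhds (f x₁)) := by
      rw [← hg₁x₁]
      exact hg₁cont.continuousWithinAt.tendsto
    apply h1.congr'
    filter_upwards [Ioo_mem_nhdsLT_of_mem (show x₁ ∈ Ioc 0 x₁ from ⟨hx₁, le_rfl⟩)]
      with x hx
    exact (hfg₁ x hx.1 hx.2).symm
  · intro x hx0 hxx₁
    have heq : f =ᶠ[nhds x] g₁ := by
      filter_upwards [IsOpen.mem_nhds isOpen_Ioo (show x ∈ Ioo 0 x₁ from ⟨hx0, hxx₁⟩)]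
        with y hy
      exact hfg₁ y hy.1 hy.2
    have h1 := (hg₁deriv x).congr_of_eventuallyEq heq
    have h2 : (ρ x * f x - γ₁) / (1 - γ₁) = a * ρ x * g₁ x - γ₁ / (1 - γ₁) := by
      rw [← hfg₁ x hx0 hxx₁, ha]
      field_simp
    rw [h2]
    exact h1
  · intro x hx
    have heq : f =ᶠ[nhds x] g₂ := by
      filter_upwards [IsOpen.mem_nhds isOpen_Ioi (show x ∈ Ioi x₁ from hx)]
        with y hy
      exact hfg₂ y (le_of_lt hy)
    have h1 := (hg₂deriv x).congr_of_eventuallyEq heq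
    have h2 : (ρ x * f x - γ₂) / (1 - γ₂) = b * ρ x * g₂ x - γ₂ / (1 - γ₂) := by
      rw [← hfg₂ x hx.le, hb]
      field_simp
    rw [h2]
    exact h1
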